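/- Every need-adjusted geometric rule φ^λ satisfies lowest rank consistency: if agent 1 leaves the hierarchy after receiving φ^λ_1(M,r,z) and agent 2's revenue becomes r_2 + r_1 - φ^λ_1(M,r,z), then the allocation of φ^λ applied to the reduced problem on {2,...,m} coincides with the original allocation for all agents 2,...,m. -/

import Mathlib

/-- The need-adjusted geometric rule with parameter `lam` on the hierarchy
`{0, ..., m-1}` (agent `m-1` is the top-ranked agent). -/
noncomputable def geomRule (lam : ℝ) (m : ℕ) (r z : ℕ → ℝ) (i : ℕ) : ℝ :=
  if i + 1 < m then
    z i + lam * ∑ j ∈ Finset.range (i + 1), (1 - lam) ^ (i - j) * (r j - z j)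
  else
    r i + ∑ j ∈ Finset.range (m - 1), (1 - lam) ^ (m - 1 - j) * (r j - z j)
theorem geometric_rule_lowest_rank_consistency
    (lam : ℝ) (hlam : lam ∈ Set.Icc (0:ℝ) 1)
    (m : ℕ) (hm : 2 ≤ m) (r z : ℕ → ℝ)
    (hval : ∀ i < m, 0 ≤ z i ∧ z i ≤ r i) :
    (∀ j < m - 1, 0 ≤ z (j + 1) ∧
      z (j + 1) ≤ (fun j => if j = 0 then r 1 + r 0 - geomRule lam m r z 0
                            else r (j + 1)) j) ∧
    ∀ i, 1 ≤ i → i < m →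
      geomRule lam m r z i =
        geomRule lam (m - 1)
          (fun j => if j = 0 then r 1 + r 0 - geomRule lam m r z 0 else r (j + 1))
          (fun j => z (j + 1)) (i - 1) := by
  obtain ⟨hlam0, hlam1⟩ := hlam
  have h1m : 1 < m := hm
  have hx0 : geomRule lam m r z 0 = z 0 + lam * (r 0 - z 0) := by
    rw [geomRule, if_pos (by omega)]
    simp
  constructor
  · intro j hj
    refine ⟨(hval (j+1) (by omega)).1, ?_⟩
    rcases eq_or_ne j 0 with h | h
    · subst h
      simp only [if_true, hx0]
      have h0 := hval 0 (by omega)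
      have h1 := hval 1 (by omega)
      nlinarith [h0.2, h1.2]
    · simp only [if_neg h]
      exact (hval (j+1) (by omega)).2
  · have key : ∀ c k : ℕ,
        ∑ j ∈ Finset.range (k+1), (1-lam)^(c+k-j) *
          ((if j = 0 then r 1 + r 0 - geomRule lam m r z 0 else r (j+1)) - z (j+1))
        = ∑ j ∈ Finset.range (k+2), (1-lam)^(c+k+1-j) * (r j - z j) := by
      intro c k
      rw [Finset.sum_range_succ',
        Finset.sum_range_succ' (fun j => (1-lam)^(c+k+1-j) * (r j - z j)),
        Finset.sum_range_succ' (fun j => (1-lam)^(c+k+1-(j+1)) * (r (j+1) - z (j+1)))]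
      simp only [Nat.succ_ne_zero, if_false, if_true, hx0]
      have hsum : ∑ j ∈ Finset.range k, (1-lam)^(c+k-(j+1)) * (r (j+1+1) - z (j+1+1))
          = ∑ j ∈ Finset.range k, (1-lam)^(c+k+1-(j+1+1)) * (r (j+1+1) - z (j+1+1)) := by
        refine Finset.sum_congr rfl fun j hj => ?_
        congr 2
        omega
      rw [hsum, Nat.sub_zero, Nat.sub_zero, show c+k+1-(0+1) = c+k from by omega,
        pow_succ]
      ring
    intro i hi1 him
    rcases lt_or_ge (i+1) m with hA | hB
    · obtain ⟨k, rfl⟩ : ∃ k, i = k + 1 := ⟨i-1, by omega⟩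
      rw [geomRule, if_pos hA, geomRule]
      rw [if_pos (by omega : k + 1 - 1 + 1 < m - 1)]
      simp only [Nat.add_sub_cancel]
      have hk := key 0 k
      rw [show (0:ℕ)+k = k from by omega] at hk
      rw [show k+1+1 = k+2 from rfl]
      rw [← hk]
    · rcases lt_or_ge m 3 with h2 | h3
      · obtain rfl : m = 2 := by omega
        obtain rfl : i = 1 := by omega
        rw [geomRule, if_neg (by omega), geomRule, if_neg (by omega)]
        simp [hx0, Finset.sum_range_one]
        ring
      · obtain ⟨n, rfl⟩ : ∃ n, m = n + 3 := ⟨m-3, by omega⟩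
        obtain rfl : i = n + 2 := by omega
        rw [geomRule, if_neg (by omega), geomRule, if_neg (by omega)]
        simp only [show n+3-1 = n+2 from rfl, show n+2-1 = n+1 from rfl,
          show n+1+1 = n+2 from rfl, if_neg (Nat.succ_ne_zero n)]
        have hk := key 1 n
        rw [show (1:ℕ)+n = n+1 from by omega, show n+1+1 = n+2 from rfl] at hk
        rw [← hk]
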